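/- For F = 1/(xy) + 1/y + x/y in GF(2)[x,x^{-1},y,y^{-1}] (Odd-rule 007, i.e., Wolfram Rule 150), the sequence b_n = |F^{2^n-1}| satisfies b_n = (2^{n+2} - (-1)^n)/3 for all n ≥ 0. -/

import Mathlib

/-- The ring `R = GF(2)[x, x⁻¹, y, y⁻¹]`, with `x^i y^j` the element
`AddMonoidAlgebra.single (i, j) 1`. -/
abbrev R2 := AddMonoidAlgebra (ZMod 2) (ℤ × ℤ)

/-- The monomial `x^i y^j` of `R`. -/
noncomputable def mon (i j : ℤ) : R2 := AddMonoidAlgebra.single (i, j) 1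


lemma mon_mul (a b c d : ℤ) : mon a b * mon c d = mon (a+c) (b+d) := by
  simp [mon, AddMonoidAlgebra.single_mul_single, Prod.ext_iff]

lemma mon_congr {a a' b b' : ℤ} (h : a = a') (h' : b = b') : mon a b = mon a' b' := by
  rw [h, h']

lemma two_eq_zero : (2 : R2) = 0 := by
  rw [show (2:R2) = 1 + 1 by norm_num, AddMonoidAlgebra.one_def,
    ← AddMonoidAlgebra.single_add]
  have : (1 : ZMod 2) + 1 = 0 := by decide
  rw [this, AddMonoidAlgebra.single_zero]

lemma four_eq_zero : (4 : R2) = 0 := by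
  rw [show (4:R2) = 2*2 by norm_num, two_eq_zero, mul_zero]

lemma add_self (x : R2) : x + x = 0 := by rw [← two_mul, two_eq_zero, zero_mul]

lemma eq_of_add_eq_zero {a b : R2} (h : a + b = 0) : a = b := by
  have := congrArg (· + b) h
  simpa [add_assoc, add_self] using this

lemma add_sq2 (a b : R2) : (a+b)^2 = a^2 + b^2 := by
  have : (a+b)^2 = a^2 + b^2 + 2*(a*b) := by ring
  rw [this, two_eq_zero, zero_mul, add_zero]

/-- the sparse element `S_n` -/
noncomputable def Sexp (N j : ℤ) : R2 :=
  mon 1 j + mon (-1) j + mon 2 j + mon (-2) j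
  + mon (N-2) j + mon (2-N) j + mon (N-1) j + mon (1-N) j
  + mon (N+1) j + mon (-(N+1)) j + mon (N+2) j + mon (-(N+2)) j

lemma stepS (N j : ℤ) :
    Sexp N j * (mon (-N) (-N) + mon 0 (-N) + mon N (-N)) = Sexp (2*N) (j-N) := by
  apply eq_of_add_eq_zero
  simp only [Sexp, add_mul, mul_add, mon_mul]
  ring_nf
  simp only [two_eq_zero, four_eq_zero, mul_zero, add_zero, zero_add]

noncomputable def fC : R2 := mon (-1) (-1) + mon 0 (-1) + mon 1 (-1)

lemma baseS : (mon 3 0 + mon (-3) 0) * fC = Sexp 2 (-1) := by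
  apply eq_of_add_eq_zero
  simp only [fC, Sexp, add_mul, mul_add, mon_mul]
  ring_nf
  simp only [two_eq_zero, four_eq_zero, mul_zero, add_zero, zero_add]

lemma frob (n : ℕ) : fC ^ (2^n)
    = mon (-(2:ℤ)^n) (-(2:ℤ)^n) + mon 0 (-(2:ℤ)^n) + mon ((2:ℤ)^n) (-(2:ℤ)^n) := by
  induction n with
  | zero => simp [fC]
  | succ n ih =>
    rw [show (2:ℕ)^(n+1) = 2^n * 2 by ring, pow_mul, ih]
    rw [add_sq2, add_sq2]
    simp only [pow_two, mon_mul]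
    apply eq_of_add_eq_zero
    ring_nf
    simp only [two_eq_zero, four_eq_zero, mul_zero, add_zero, zero_add]

lemma keyS (n : ℕ) : (mon 3 0 + mon (-3) 0) * fC ^ (2^(n+1) - 1)
    = Sexp ((2:ℤ)^(n+1)) (1 - (2:ℤ)^(n+1)) := by
  induction n with
  | zero => simpa using baseS
  | succ n ih =>
    have h1 : 1 ≤ (2:ℕ)^(n+1) := Nat.one_le_two_pow
    have hsplit : (2:ℕ)^(n+1+1) - 1 = (2^(n+1) - 1) + 2^(n+1) := by
      have h2 : (2:ℕ)^(n+1+1) = 2^(n+1) + 2^(n+1) := by ring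
      omega
    rw [hsplit, pow_add, ← mul_assoc, ih, frob (n+1), stepS]
    congr 1 <;> ring

/-- the telescoping lemma -/
lemma telescope (u : ℕ → R2) (m : ℕ) :
    (∑ k ∈ Finset.range m, u (k+1+1)) + (∑ k ∈ Finset.range m, u k)
      = u m + u (m+1) + u 0 + u 1 := by
  set A := ∑ k ∈ Finset.range m, u (k+1+1) with hA
  set B := ∑ k ∈ Finset.range m, u k with hB
  have h1 : (∑ k ∈ Finset.range (m+1+1), u k) = A + u (0+1) + u 0 := by
    rw [Finset.sum_range_succ' u (m+1), Finset.sum_range_succ' (fun i => u (i+1)) m]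
  have h2 : (∑ k ∈ Finset.range (m+1+1), u k) = B + u m + u (m+1) := by
    rw [Finset.sum_range_succ, Finset.sum_range_succ]
  have E : A + u 1 + u 0 = B + u m + u (m+1) := by
    simpa using h1.symm.trans h2
  have h3 : A + B + (u 0 + u 0) + (u 1 + u 1) = (A + u 1 + u 0) + (B + u 0 + u 1) := by
    abel
  rw [add_self, add_self, add_zero, add_zero, E] at h3
  have h4 : (B + u m + u (m+1)) + (B + u 0 + u 1)
      = (u m + u (m+1) + u 0 + u 1) + (B + B) := by abel
  rw [add_self, add_zero] at h4
  rw [h3, h4]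

lemma helper1 (c j : ℤ) (m : ℕ) :
    (mon 3 0 + mon (-3) 0) * (∑ k ∈ Finset.range m, mon (c + 3*(k:ℤ)) j)
    = mon (c + 3*(m:ℤ) - 3) j + mon (c + 3*(m:ℤ)) j + mon (c-3) j + mon c j := by
  set u : ℕ → R2 := fun k => mon (c - 3 + 3*(k:ℤ)) j with hu
  have e2 : mon 3 0 * (∑ k ∈ Finset.range m, mon (c + 3*(k:ℤ)) j)
      = ∑ k ∈ Finset.range m, u (k+1+1) := by
    rw [Finset.mul_sum]
    refine Finset.sum_congr rfl (fun k _ => ?_)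
    rw [mon_mul, hu]
    exact mon_congr (by push_cast; ring) (by ring)
  have e3 : mon (-3) 0 * (∑ k ∈ Finset.range m, mon (c + 3*(k:ℤ)) j)
      = ∑ k ∈ Finset.range m, u k := by
    rw [Finset.mul_sum]
    refine Finset.sum_congr rfl (fun k _ => ?_)
    rw [mon_mul, hu]
    exact mon_congr (by push_cast; ring) (by ring)
  rw [add_mul, e2, e3, telescope u m, hu]
  refine congrArg₂ (· + ·) (congrArg₂ (· + ·) (congrArg₂ (· + ·) ?_ ?_) ?_) ?_ <;>
    exact mon_congr (by push_cast; ring) rfl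

lemma helper2 (c j : ℤ) (m : ℕ) :
    (mon 3 0 + mon (-3) 0) * (∑ k ∈ Finset.range m, mon (c + -3*(k:ℤ)) j)
    = mon (c + -3*(m:ℤ) + 3) j + mon (c + -3*(m:ℤ)) j + mon (c+3) j + mon c j := by
  set u : ℕ → R2 := fun k => mon (c + 3 + -3*(k:ℤ)) j with hu
  have e2 : mon 3 0 * (∑ k ∈ Finset.range m, mon (c + -3*(k:ℤ)) j)
      = ∑ k ∈ Finset.range m, u k := by
    rw [Finset.mul_sum]
    refine Finset.sum_congr rfl (fun k _ => ?_)
    rw [mon_mul, hu]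
    exact mon_congr (by push_cast; ring) (by ring)
  have e3 : mon (-3) 0 * (∑ k ∈ Finset.range m, mon (c + -3*(k:ℤ)) j)
      = ∑ k ∈ Finset.range m, u (k+1+1) := by
    rw [Finset.mul_sum]
    refine Finset.sum_congr rfl (fun k _ => ?_)
    rw [mon_mul, hu]
    exact mon_congr (by push_cast; ring) (by ring)
  rw [add_mul, e2, e3, add_comm (∑ k ∈ Finset.range m, u k), telescope u m, hu]
  refine congrArg₂ (· + ·) (congrArg₂ (· + ·) (congrArg₂ (· + ·) ?_ ?_) ?_) ?_ <;>
    exact mon_congr (by push_cast; ring) rfl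

/-- the explicit form of `f^(2^n-1)` -/
noncomputable def gT (P Q : ℕ) (e j : ℤ) : R2 :=
    (∑ k ∈ Finset.range (2*P+1), mon (-3*(P:ℤ) + 3*(k:ℤ)) j)
  + (∑ k ∈ Finset.range Q, mon (e + 3*(k:ℤ)) j)
  + (∑ k ∈ Finset.range Q, mon (-e + -3*(k:ℤ)) j)

lemma AG2 (P : ℕ) (j : ℤ) :
    (mon 3 0 + mon (-3) 0) * gT P P 2 j = Sexp (3*(P:ℤ)+1) j := by
  unfold gT
  rw [mul_add, mul_add, helper1 (-3*(P:ℤ)) j (2*P+1), helper1 2 j P, helper2 (-2) j P]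
  apply eq_of_add_eq_zero
  unfold Sexp
  push_cast
  ring_nf
  simp only [two_eq_zero, four_eq_zero, mul_zero, add_zero, zero_add]

lemma AG1 (P : ℕ) (j : ℤ) :
    (mon 3 0 + mon (-3) 0) * gT P (P+1) 1 j = Sexp (3*(P:ℤ)+2) j := by
  unfold gT
  rw [mul_add, mul_add, helper1 (-3*(P:ℤ)) j (2*P+1), helper1 1 j (P+1), helper2 (-1) j (P+1)]
  apply eq_of_add_eq_zero
  unfold Sexp
  push_cast
  ring_nf
  simp only [two_eq_zero, four_eq_zero, mul_zero, add_zero, zero_add]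

lemma Ane : (mon 3 0 + mon (-3) 0 : R2) ≠ 0 := by
  intro h
  have h2 := eq_of_add_eq_zero h
  simp only [mon] at h2
  rw [AddMonoidAlgebra.single_inj] at h2
  simp at h2

lemma supp_AP (c d j : ℤ) (hd : d ≠ 0) (m : ℕ) :
    (∑ k ∈ Finset.range m, mon (c + d*(k:ℤ)) j).coeff.support
      = (Finset.range m).image (fun k : ℕ => ((c + d*(k:ℤ), j) : ℤ × ℤ)) := by
  have hs : ∀ k : ℕ, (mon (c + d*(k:ℤ)) j).coeff.support = {((c + d*(k:ℤ), j) : ℤ × ℤ)} :=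
    fun k => Finsupp.support_single_ne_zero _ one_ne_zero
  have hdisj : ∀ k1 k2 : ℕ, k1 ≠ k2 →
      Disjoint (mon (c + d*(k1:ℤ)) j).coeff.support (mon (c + d*(k2:ℤ)) j).coeff.support := by
    intro k1 k2 hne
    rw [hs, hs, Finset.disjoint_singleton]
    intro hcontra
    apply hne
    have h3 : d * (k1:ℤ) = d * (k2:ℤ) := by
      have := (Prod.mk.injEq _ _ _ _).mp hcontra
      omega
    exact_mod_cast mul_left_cancel₀ hd h3
  rw [AddMonoidAlgebra.coeff_sum, Finsupp.support_sum_eq_biUnion _ hdisj, ← Finset.biUnion_singleton]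
  exact Finset.biUnion_congr rfl (fun k _ => hs k)

lemma card_gT (P Q : ℕ) (e j : ℤ) (he : e = 1 ∨ e = 2) :
    (gT P Q e j).coeff.support.card = (2*P+1) + Q + Q := by
  have s1 := supp_AP (-3*(P:ℤ)) 3 j (by norm_num) (2*P+1)
  have s2 := supp_AP e 3 j (by norm_num) Q
  have s3 := supp_AP (-e) (-3) j (by norm_num) Q
  have d23 : Disjoint ((∑ k ∈ Finset.range Q, mon (e + 3*(k:ℤ)) j).coeff.support)
      ((∑ k ∈ Finset.range Q, mon (-e + -3*(k:ℤ)) j).coeff.support) := by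
    rw [s2, s3, Finset.disjoint_left]
    rintro a ha hb
    simp only [Finset.mem_image, Finset.mem_range] at ha hb
    obtain ⟨k1, _, rfl⟩ := ha
    obtain ⟨k2, _, h⟩ := hb
    have := (Prod.mk.injEq _ _ _ _).mp h
    rcases he with rfl | rfl <;> omega
  have d123 : Disjoint ((∑ k ∈ Finset.range (2*P+1), mon (-3*(P:ℤ) + 3*(k:ℤ)) j).coeff.support)
      (((∑ k ∈ Finset.range Q, mon (e + 3*(k:ℤ)) j)
        + (∑ k ∈ Finset.range Q, mon (-e + -3*(k:ℤ)) j)).coeff.support) := by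
    rw [AddMonoidAlgebra.coeff_add, Finsupp.support_add_eq d23, s1, s2, s3, Finset.disjoint_left]
    rintro a ha hb
    simp only [Finset.mem_image, Finset.mem_range, Finset.mem_union] at ha hb
    obtain ⟨k1, _, rfl⟩ := ha
    rcases hb with ⟨k2, _, h⟩ | ⟨k2, _, h⟩ <;>
      · have := (Prod.mk.injEq _ _ _ _).mp h
        rcases he with rfl | rfl <;> omega
  have inj : ∀ (c d : ℤ), d ≠ 0 → ∀ (m : ℕ),
      ((Finset.range m).image (fun k : ℕ => ((c + d*(k:ℤ), j) : ℤ × ℤ))).card = m := by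
    intro c d hd m
    rw [Finset.card_image_of_injOn, Finset.card_range]
    intro k1 _ k2 _ h
    have h3 : d * (k1:ℤ) = d * (k2:ℤ) := by
      have := (Prod.mk.injEq _ _ _ _).mp h
      omega
    exact_mod_cast mul_left_cancel₀ hd h3
  unfold gT
  rw [add_assoc, AddMonoidAlgebra.coeff_add, Finsupp.support_add_eq d123, AddMonoidAlgebra.coeff_add,
      Finsupp.support_add_eq d23,
    Finset.card_union_of_disjoint, Finset.card_union_of_disjoint]
  · rw [s1, s2, s3, inj _ _ (by norm_num), inj _ _ (by norm_num), inj _ _ (by norm_num)]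
    omega
  · exact d23
  · rw [AddMonoidAlgebra.coeff_add, Finsupp.support_add_eq d23] at d123; exact d123

lemma four_pow_mod3 (m : ℕ) : ∃ P : ℕ, 4^m = 3*P+1 := by
  induction m with
  | zero => exact ⟨0, rfl⟩
  | succ m ih =>
    obtain ⟨P, hP⟩ := ih
    exact ⟨4*P+1, by rw [pow_succ, hP]; ring⟩

/-- For `F = 1/(xy) + 1/y + x/y` (Odd-rule 007, Wolfram Rule 150), the sequence
`b n = |F^(2^n - 1)|` satisfies `b n = (2^(n+2) - (-1)^n)/3` for all `n ≥ 0`. -/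
theorem oddRule007_growth (n : ℕ) :
    (((mon (-1) (-1) + mon 0 (-1) + mon 1 (-1)) ^ (2 ^ n - 1)).coeff.support.card : ℤ)
      = (2 ^ (n + 2) - (-1) ^ n) / 3 := by
  have hfc : (mon (-1) (-1) + mon 0 (-1) + mon 1 (-1)) = fC := rfl
  rw [hfc]
  match n with
  | 0 =>
    norm_num
  | (m+1) =>
    have h4 : (2:ℤ)^(m+1+2) = 4 * (2:ℤ)^(m+1) := by ring
    rcases Nat.even_or_odd (m+1) with hpar | hpar
    · obtain ⟨t, ht⟩ := hpar
      obtain ⟨P, hP⟩ := four_pow_mod3 t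
      have h2P : (2:ℕ)^(m+1) = 3*P+1 := by
        rw [ht, pow_add, ← mul_pow]; norm_num [hP]
      have hZ : (2:ℤ)^(m+1) = 3*(P:ℤ)+1 := by exact_mod_cast congrArg (Nat.cast (R := ℤ)) h2P
      have hg : fC ^ (2^(m+1) - 1) = gT P P 2 (1 - (2:ℤ)^(m+1)) := by
        apply mul_left_cancel₀ Ane
        rw [keyS m, AG2 P (1 - (2:ℤ)^(m+1)), hZ]
      rw [hg, card_gT P P 2 _ (Or.inr rfl), Even.neg_one_pow ⟨t, ht⟩, h4, hZ]
      push_cast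
      omega
    · obtain ⟨t, ht⟩ := hpar
      obtain ⟨P, hP⟩ := four_pow_mod3 t
      have h2P : (2:ℕ)^(m+1) = 3*(2*P)+2 := by
        rw [ht, pow_succ, pow_mul]; norm_num [hP]; ring
      have hZ : (2:ℤ)^(m+1) = 3*(2*(P:ℤ))+2 := by
        exact_mod_cast congrArg (Nat.cast (R := ℤ)) h2P
      have hg : fC ^ (2^(m+1) - 1) = gT (2*P) (2*P+1) 1 (1 - (2:ℤ)^(m+1)) := by
        apply mul_left_cancel₀ Ane
        rw [keyS m, AG1 (2*P) (1 - (2:ℤ)^(m+1)), hZ]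
        push_cast
        ring_nf
      rw [hg, card_gT _ _ 1 _ (Or.inl rfl), Odd.neg_one_pow ⟨t, ht⟩, h4, hZ]
      push_cast
      omega
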